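/- Let K_n be the complete graph on n vertices, let k ≥ 1, let S be a subset of its vertices with partial coloring c : S → [k], and let C = V ∖ S be the set of uncolored vertices. Let p = max_{i ∈ [k]} |c^{-1}(i)| be the largest number of vertices of S sharing one color (p = 0 if S is empty), and let h_S be the number of edges with both endpoints in S whose endpoints receive the same color under c. Then the maximum, over all extensions c' of c to full colorings of K_n, of the number of happy edges equals h_S + p·|C| + |C|(|C|−1)/2, and this maximum is attained by an extension giving all vertices of C one common color of maximum multiplicity in c. -/

import Mathlib

open Finset
open scoped Classical

/-- The number of happy edges of a graph `G` under a full coloring `c`: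
an edge is happy when all (i.e., both) of its endpoints receive the same color. -/
noncomputable def happyEdgeCount {V : Type*} [Fintype V] {k : ℕ}
    (G : SimpleGraph V) (c : V → Fin k) : ℕ :=
  (G.edgeFinset.filter (fun e => ∀ x ∈ e, ∀ y ∈ e, c x = c y)).card

lemma choose2_add (a b : ℕ) : (a + b).choose 2 = a.choose 2 + a * b + b.choose 2 := by
  induction b with
  | zero => simp
  | succ b ih =>
    have h1 : (a + b + 1).choose 2 = (a + b).choose 1 + (a + b).choose 2 :=
      Nat.choose_succ_succ _ _
    have h2 : (b + 1).choose 2 = b.choose 1 + b.choose 2 := Nat.choose_succ_succ _ _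
    simp [Nat.choose_one_right] at h1 h2
    rw [show a + (b+1) = a + b + 1 from rfl, h1, h2, ih]
    ring

lemma sum_choose_two_le {ι : Type*} (s : Finset ι) (f : ι → ℕ) :
    ∑ i ∈ s, (f i).choose 2 ≤ (∑ i ∈ s, f i).choose 2 := by
  induction s using Finset.induction with
  | empty => simp
  | insert _ _ h ih =>
    rw [sum_insert h, sum_insert h, choose2_add]
    omega

lemma sym2_diag_card {α : Type*} [DecidableEq α] (u : Finset α) :
    (u.sym2.filter (fun e => e.IsDiag)).card = u.card := by
  have him : u.sym2.filter (fun e => e.IsDiag) = u.image Sym2.diag := by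
    ext e
    refine e.ind fun x y => ?_
    simp only [Finset.mem_filter, Finset.mem_sym2_iff, Sym2.mem_iff, Finset.mem_image]
    constructor
    · rintro ⟨hmem, hdiag⟩
      have hxy : x = y := Sym2.isDiag_iff_proj_eq.1 hdiag
      subst hxy
      exact ⟨x, hmem x (Or.inl rfl), rfl⟩
    · rintro ⟨a, ha, hae⟩
      have : x = a ∧ y = a := by
        rw [Sym2.diag] at hae
        have := (Sym2.eq_iff).1 hae.symm
        tauto
      obtain ⟨rfl, rfl⟩ := this
      exact ⟨by rintro z (rfl | rfl) <;> exact ha, Sym2.isDiag_iff_proj_eq.2 rfl⟩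
  rw [him, card_image_of_injective u Sym2.diag_injective]

lemma edges_inside {n : ℕ} (u : Finset (Fin n)) :
    ((⊤ : SimpleGraph (Fin n)).edgeFinset.filter (fun e => ∀ x ∈ e, x ∈ u)).card
      = u.card.choose 2 := by
  have hset : (⊤ : SimpleGraph (Fin n)).edgeFinset.filter (fun e => ∀ x ∈ e, x ∈ u)
      = u.sym2.filter (fun e => ¬ e.IsDiag) := by
    ext e
    simp only [Finset.mem_filter, SimpleGraph.mem_edgeFinset, SimpleGraph.edgeSet_top,
      Set.mem_setOf_eq, Finset.mem_sym2_iff]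
    tauto
  rw [hset]
  have h1 := Finset.card_sym2 u
  have h2 : (u.sym2.filter (fun e => ¬ e.IsDiag)).card
      + (u.sym2.filter (fun e => e.IsDiag)).card = u.sym2.card := by
    have := Finset.card_filter_add_card_filter_not (s := u.sym2) (p := fun e => e.IsDiag)
    omega
  have h3 := sym2_diag_card u
  have h4 : (u.card + 1).choose 2 = u.card.choose 1 + u.card.choose 2 :=
    Nat.choose_succ_succ _ _
  simp [Nat.choose_one_right] at h4
  omega

lemma count_by_color {n k : ℕ} (t : Finset (Fin n)) (d : Fin n → Fin k) :
    ((⊤ : SimpleGraph (Fin n)).edgeFinset.filter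
        (fun e => (∀ x ∈ e, x ∈ t) ∧ ∀ x ∈ e, ∀ y ∈ e, d x = d y)).card
      = ∑ i : Fin k, ((t.filter fun v => d v = i).card).choose 2 := by
  have hset : (⊤ : SimpleGraph (Fin n)).edgeFinset.filter
        (fun e => (∀ x ∈ e, x ∈ t) ∧ ∀ x ∈ e, ∀ y ∈ e, d x = d y)
      = Finset.univ.biUnion (fun i : Fin k =>
          (⊤ : SimpleGraph (Fin n)).edgeFinset.filter
            (fun e => ∀ x ∈ e, x ∈ t.filter fun v => d v = i)) := by
    ext e
    refine e.ind fun x y => ?_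
    simp only [Finset.mem_filter, Finset.mem_biUnion, Finset.mem_univ, true_and]
    constructor
    · rintro ⟨he, ht, hcol⟩
      exact ⟨d x, he, fun z hz =>
        ⟨ht z hz, hcol z hz x (Sym2.mem_mk_left x y)⟩⟩
    · rintro ⟨i, he, h⟩
      exact ⟨he, fun z hz => (h z hz).1,
        fun z hz w hw => by rw [(h z hz).2, (h w hw).2]⟩
  rw [hset, Finset.card_biUnion]
  · exact Finset.sum_congr rfl fun i _ => edges_inside _
  · intro i _ j _ hij
    rw [Function.onFun, Finset.disjoint_left]
    intro e hei hej
    revert hei hej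
    refine e.ind fun x y => ?_
    simp only [Finset.mem_filter]
    rintro ⟨-, hi⟩ ⟨-, hj⟩
    exact hij (((hi x (Sym2.mem_mk_left x y)).2).symm.trans
      ((hj x (Sym2.mem_mk_left x y)).2))

lemma happy_decomp {n k : ℕ} (S : Finset (Fin n)) (c c' : Fin n → Fin k)
    (hext : ∀ v ∈ S, c' v = c v) :
    happyEdgeCount (⊤ : SimpleGraph (Fin n)) c'
      = ((⊤ : SimpleGraph (Fin n)).edgeFinset.filter
          (fun e => (∀ x ∈ e, x ∈ S) ∧ ∀ x ∈ e, ∀ y ∈ e, c x = c y)).card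
        + ∑ i : Fin k, (S.filter fun v => c v = i).card * (Sᶜ.filter fun v => c' v = i).card
        + ∑ i : Fin k, ((Sᶜ.filter fun v => c' v = i).card).choose 2 := by
  have h1 : happyEdgeCount (⊤ : SimpleGraph (Fin n)) c'
      = ∑ i : Fin k, ((Finset.univ.filter fun v => c' v = i).card).choose 2 := by
    rw [← count_by_color Finset.univ c']
    unfold happyEdgeCount
    congr 1
    ext e
    simp only [Finset.mem_filter, SimpleGraph.mem_edgeFinset, Finset.mem_univ]
    exact ⟨fun ⟨h1, h2⟩ => ⟨h1, fun _ _ => trivial, h2⟩, fun ⟨h1, _, h2⟩ => ⟨h1, h2⟩⟩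
  have hfib : ∀ i : Fin k, (Finset.univ.filter fun v => c' v = i).card
      = (S.filter fun v => c v = i).card + (Sᶜ.filter fun v => c' v = i).card := by
    intro i
    have hS : S.filter (fun v => c' v = i) = S.filter (fun v => c v = i) := by
      apply Finset.filter_congr
      intro v hv
      rw [hext v hv]
    have hu : (Finset.univ.filter fun v => c' v = i)
        = S.filter (fun v => c' v = i) ∪ Sᶜ.filter (fun v => c' v = i) := by
      rw [← Finset.filter_union, Finset.union_compl]
    rw [hu, Finset.card_union_of_disjoint
      (Finset.disjoint_filter_filter (disjoint_compl_right)), hS]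
  rw [h1]
  have := count_by_color S c
  calc ∑ i : Fin k, ((Finset.univ.filter fun v => c' v = i).card).choose 2
      = ∑ i : Fin k, (((S.filter fun v => c v = i).card).choose 2
          + (S.filter fun v => c v = i).card * (Sᶜ.filter fun v => c' v = i).card
          + ((Sᶜ.filter fun v => c' v = i).card).choose 2) := by
        refine Finset.sum_congr rfl fun i _ => ?_
        rw [hfib i, choose2_add]
    _ = _ := by
        rw [Finset.sum_add_distrib, Finset.sum_add_distrib, this]

/-- For the complete graph `K_n` with a partial coloring `c : S → [k]`,
letting `C = V ∖ S`, `p` the maximum multiplicity of a color of `c` on `S`, and `h_S` the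
number of happy edges inside `S`, the maximum number of happy edges over all extensions of `c`
equals `h_S + p·|C| + |C|(|C|−1)/2`, and it is attained by an extension that colors all of `C`
with a single color of maximum multiplicity. -/
theorem stmt1 (n k : ℕ) (hk : 1 ≤ k) (S : Finset (Fin n)) (c : Fin n → Fin k) :
    IsGreatest
      {m : ℕ | ∃ c' : Fin n → Fin k, (∀ v ∈ S, c' v = c v) ∧
        m = happyEdgeCount (⊤ : SimpleGraph (Fin n)) c'}
      (((⊤ : SimpleGraph (Fin n)).edgeFinset.filter
          (fun e => (∀ x ∈ e, x ∈ S) ∧ ∀ x ∈ e, ∀ y ∈ e, c x = c y)).card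
        + (Finset.univ.sup fun i : Fin k => (S.filter fun v => c v = i).card) * Sᶜ.card
        + Sᶜ.card * (Sᶜ.card - 1) / 2) ∧
    ∃ i : Fin k,
      (S.filter fun v => c v = i).card =
        (Finset.univ.sup fun i : Fin k => (S.filter fun v => c v = i).card) ∧
      happyEdgeCount (⊤ : SimpleGraph (Fin n)) (fun v => if v ∈ S then c v else i) =
        ((⊤ : SimpleGraph (Fin n)).edgeFinset.filter
            (fun e => (∀ x ∈ e, x ∈ S) ∧ ∀ x ∈ e, ∀ y ∈ e, c x = c y)).card
          + (Finset.univ.sup fun i : Fin k => (S.filter fun v => c v = i).card) * Sᶜ.card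
          + Sᶜ.card * (Sᶜ.card - 1) / 2 := by
  obtain ⟨i₀, -, hi₀⟩ := Finset.exists_mem_eq_sup (Finset.univ : Finset (Fin k))
    ⟨⟨0, hk⟩, Finset.mem_univ _⟩ (fun i => (S.filter fun v => c v = i).card)
  set p := Finset.univ.sup (fun i : Fin k => (S.filter fun v => c v = i).card) with hp
  set hS := ((⊤ : SimpleGraph (Fin n)).edgeFinset.filter
      (fun e => (∀ x ∈ e, x ∈ S) ∧ ∀ x ∈ e, ∀ y ∈ e, c x = c y)).card with hhS
  set c₀ : Fin n → Fin k := fun v => if v ∈ S then c v else i₀ with hc₀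
  have hext₀ : ∀ v ∈ S, c₀ v = c v := fun v hv => if_pos hv
  have hbcard : ∀ i : Fin k, (Sᶜ.filter fun v => c₀ v = i).card
      = if i = i₀ then Sᶜ.card else 0 := by
    intro i
    split_ifs with h
    · subst h
      rw [Finset.filter_true_of_mem]
      intro v hv
      simp [hc₀, Finset.mem_compl.1 hv]
    · rw [Finset.filter_false_of_mem, Finset.card_empty]
      intro v hv
      simp only [hc₀, if_neg (Finset.mem_compl.1 hv)]
      exact fun hh => h hh.symm
  have hval : happyEdgeCount (⊤ : SimpleGraph (Fin n)) c₀
      = hS + p * Sᶜ.card + Sᶜ.card * (Sᶜ.card - 1) / 2 := by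
    rw [happy_decomp S c c₀ hext₀, ← hhS]
    have e1 : ∑ i : Fin k, (S.filter fun v => c v = i).card
        * (Sᶜ.filter fun v => c₀ v = i).card = p * Sᶜ.card := by
      calc ∑ i : Fin k, (S.filter fun v => c v = i).card
            * (Sᶜ.filter fun v => c₀ v = i).card
          = ∑ i : Fin k, (if i = i₀ then (S.filter fun v => c v = i).card * Sᶜ.card
              else 0) := by
            refine Finset.sum_congr rfl fun i _ => ?_
            rw [hbcard i]
            split_ifs <;> simp
        _ = (S.filter fun v => c v = i₀).card * Sᶜ.card := by
            rw [Finset.sum_ite_eq' Finset.univ i₀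
              (fun i => (S.filter fun v => c v = i).card * Sᶜ.card)]
            simp
        _ = p * Sᶜ.card := by rw [hi₀]
    have e2 : ∑ i : Fin k, ((Sᶜ.filter fun v => c₀ v = i).card).choose 2
        = (Sᶜ.card).choose 2 := by
      calc ∑ i : Fin k, ((Sᶜ.filter fun v => c₀ v = i).card).choose 2
          = ∑ i : Fin k, (if i = i₀ then (Sᶜ.card).choose 2 else 0) := by
            refine Finset.sum_congr rfl fun i _ => ?_
            rw [hbcard i]
            split_ifs <;> simp
        _ = (Sᶜ.card).choose 2 := by
            rw [Finset.sum_ite_eq' Finset.univ i₀ (fun _ => (Sᶜ.card).choose 2)]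
            simp
    rw [e1, e2, Nat.choose_two_right]
  refine ⟨⟨⟨c₀, hext₀, hval.symm⟩, ?_⟩, ⟨i₀, hi₀.symm, hval⟩⟩
  rintro m ⟨c', hext, rfl⟩
  rw [happy_decomp S c c' hext, ← hhS]
  have hbsum : ∑ i : Fin k, (Sᶜ.filter fun v => c' v = i).card = Sᶜ.card :=
    (Finset.card_eq_sum_card_fiberwise (fun v _ => Finset.mem_univ (c' v))).symm
  have h1 : ∑ i : Fin k, (S.filter fun v => c v = i).card
      * (Sᶜ.filter fun v => c' v = i).card ≤ p * Sᶜ.card := by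
    calc ∑ i : Fin k, (S.filter fun v => c v = i).card
          * (Sᶜ.filter fun v => c' v = i).card
        ≤ ∑ i : Fin k, p * (Sᶜ.filter fun v => c' v = i).card :=
          Finset.sum_le_sum fun i _ => Nat.mul_le_mul_right _
            (hp ▸ Finset.le_sup (f := fun i : Fin k => (S.filter fun v => c v = i).card) (Finset.mem_univ i))
      _ = p * Sᶜ.card := by rw [← Finset.mul_sum, hbsum]
  have h2 : ∑ i : Fin k, ((Sᶜ.filter fun v => c' v = i).card).choose 2
      ≤ (Sᶜ.card).choose 2 := by
    have := sum_choose_two_le Finset.univ (fun i : Fin k => (Sᶜ.filter fun v => c' v = i).card)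
    rwa [hbsum] at this
  have h3 : (Sᶜ.card).choose 2 = Sᶜ.card * (Sᶜ.card - 1) / 2 := Nat.choose_two_right _
  omega
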